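/- Exact contraction of the qubit amplitude damping semigroup: Let ℒ be the qubit amplitude damping Liouvillian with rate γ > 0. Then sup_{ρ ∈ S_2} d_tr(e^{tℒ}(ρ), |0⟩⟨0|) = e^{−γt} for 0 ≤ t ≤ (log 2)/γ, and sup_{ρ ∈ S_2} d_tr(e^{tℒ}(ρ), |0⟩⟨0|) = e^{−γt/2}/√(4(1 − e^{−γt})) for t ≥ (log 2)/γ. In particular, the contraction decays asymptotically as e^{−γt/2} and not as e^{−γt}. -/

import Mathlib

open scoped Matrix ComplexOrder
open Matrix

/-- The square root of a positive semidefinite matrix, as defined in Mathlib (Dec 2024)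
(`Matrix.PosSemidef.sqrt`, since removed), restored verbatim. -/
noncomputable def Matrix.PosSemidef.sqrt {𝕜 n : Type*} [RCLike 𝕜] [Fintype n] [DecidableEq n]
    {A : Matrix n n 𝕜} (hA : A.PosSemidef) : Matrix n n 𝕜 :=
  hA.1.eigenvectorUnitary.1 * diagonal ((↑) ∘ (√·) ∘ hA.1.eigenvalues) *
  (star hA.1.eigenvectorUnitary : Matrix n n 𝕜)

section Defs

variable {m : Type*}

/-- The trace norm `‖X‖₁ = tr √(XᴴX)`. -/
noncomputable def traceNorm [Fintype m] [DecidableEq m] (X : Matrix m m ℂ) : ℝ :=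
  ((Matrix.posSemidef_conjTranspose_mul_self X).sqrt.trace).re

/-- The trace distance `d_tr(ρ,σ) = ‖ρ - σ‖₁ / 2`. -/
noncomputable def trDist [Fintype m] [DecidableEq m] (ρ σ : Matrix m m ℂ) : ℝ :=
  traceNorm (ρ - σ) / 2

/-- A density matrix: positive semidefinite (hence Hermitian) with unit trace. -/
def IsDensityMatrix [Fintype m] (ρ : Matrix m m ℂ) : Prop :=
  ρ.PosSemidef ∧ ρ.trace = 1

/-- Apply a superoperator, given by its matrix representation
(rows/columns indexed by matrix entry positions), to a matrix. -/
noncomputable def appS [Fintype m] (S : Matrix (m × m) (m × m) ℂ) (ρ : Matrix m m ℂ) :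
    Matrix m m ℂ :=
  Matrix.of fun i j => ∑ p : m × m, S (i, j) p * ρ p.1 p.2

/-- The Choi matrix of a superoperator. -/
def choiMatrix [Fintype m] (S : Matrix (m × m) (m × m) ℂ) : Matrix (m × m) (m × m) ℂ :=
  Matrix.of fun p q => S (p.2, q.2) (p.1, q.1)

/-- Quantum channel: completely positive (positive semidefinite Choi matrix)
and trace preserving. -/
def IsQChannelM [Fintype m] (S : Matrix (m × m) (m × m) ℂ) : Prop :=
  (choiMatrix S).PosSemidef ∧ ∀ X : Matrix m m ℂ, (appS S X).trace = X.trace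

/-- `expS t L` is the superoperator `e^{tL}`. -/
noncomputable def expS [Fintype m] [DecidableEq m] (t : ℝ) (L : Matrix (m × m) (m × m) ℂ) :
    Matrix (m × m) (m × m) ℂ :=
  NormedSpace.exp ((t : ℂ) • L)

/-- A Liouvillian: `e^{tL}` is a quantum channel for every `t ≥ 0`. -/
def IsLiouvillianM [Fintype m] [DecidableEq m] (L : Matrix (m × m) (m × m) ℂ) : Prop :=
  ∀ t : ℝ, 0 ≤ t → IsQChannelM (expS t L)

/-- `lam` is the spectral gap of the Liouvillian `L`:
`lam = inf {|Re μ| : μ eigenvalue of L, Re μ < 0}` (and such an eigenvalue exists). -/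
def IsGapOf [Fintype m] [DecidableEq m] (L : Matrix (m × m) (m × m) ℂ) (lam : ℝ) : Prop :=
  (∃ μ ∈ spectrum ℂ L, μ.re < 0) ∧
  lam = sInf {r : ℝ | ∃ μ ∈ spectrum ℂ L, μ.re < 0 ∧ r = -μ.re}

/-- `Tφ` is the peripheral evolution `T_{φ,t} = Σ_{k : Re λ_k = 0} e^{tλ_k} P_k` of the
semigroup generated by `L`: it acts as `e^{tμ}` on each generalized eigenspace of `L` with
`Re μ = 0`, and as `0` on each generalized eigenspace with `Re μ < 0`. -/
def IsPeriphEvolAt [Fintype m] (L : Matrix (m × m) (m × m) ℂ) (t : ℝ)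
    (Tφ : Matrix (m × m) (m × m) ℂ) : Prop :=
  (∀ μ : ℂ, μ.re = 0 → ∀ v ∈ Module.End.maxGenEigenspace (Matrix.mulVecLin L) μ,
      Tφ.mulVec v = Complex.exp (t * μ) • v) ∧
  (∀ μ : ℂ, μ.re < 0 → ∀ v ∈ Module.End.maxGenEigenspace (Matrix.mulVecLin L) μ,
      Tφ.mulVec v = 0)

/-- `Tφ` is the peripheral projection `T_φ = Σ_{k : |μ_k| = 1} μ_k P_k` of the channel `T`:
it acts as `μ •` on each generalized eigenspace of `T` with `|μ| = 1`, and as `0` on each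
generalized eigenspace with `|μ| < 1`. -/
def IsPeriphProjM [Fintype m] (T Tφ : Matrix (m × m) (m × m) ℂ) : Prop :=
  (∀ μ : ℂ, ‖μ‖ = 1 → ∀ v ∈ Module.End.maxGenEigenspace (Matrix.mulVecLin T) μ,
      Tφ.mulVec v = μ • v) ∧
  (∀ μ : ℂ, ‖μ‖ < 1 → ∀ v ∈ Module.End.maxGenEigenspace (Matrix.mulVecLin T) μ,
      Tφ.mulVec v = 0)

/-- The trace-norm contraction `η_tr[T] = sup_ρ d_tr(T(ρ), Tφ(ρ))` over density matrices. -/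
noncomputable def etaTR [Fintype m] [DecidableEq m] (T Tφ : Matrix (m × m) (m × m) ℂ) : ℝ :=
  ⨆ ρ : {ρ : Matrix m m ℂ // IsDensityMatrix ρ}, trDist (appS T ρ.1) (appS Tφ ρ.1)

open scoped Classical in
/-- Matrix square root of a positive semidefinite matrix (junk value `0` otherwise). -/
noncomputable def msqrt [Fintype m] [DecidableEq m] (A : Matrix m m ℂ) : Matrix m m ℂ :=
  if h : A.PosSemidef then h.sqrt else 0

/-- The fidelity `F(ρ,σ) = tr √(√ρ σ √ρ)`. -/
noncomputable def fidelity [Fintype m] [DecidableEq m] (ρ σ : Matrix m m ℂ) : ℝ :=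
  ((msqrt (msqrt ρ * σ * msqrt ρ)).trace).re

/-- The Bures distance `d_B(ρ,σ) = √(1 - F(ρ,σ))`. -/
noncomputable def buresDist [Fintype m] [DecidableEq m] (ρ σ : Matrix m m ℂ) : ℝ :=
  Real.sqrt (1 - fidelity ρ σ)

/-- The Frobenius (Hilbert-Schmidt) norm `‖X‖₂ = √(tr XᴴX)`. -/
noncomputable def frobNorm [Fintype m] (X : Matrix m m ℂ) : ℝ :=
  Real.sqrt ((Xᴴ * X).trace.re)

/-- The operator (spectral) norm `‖A‖_∞`. -/
noncomputable def specNorm [Fintype m] [DecidableEq m] (A : Matrix m m ℂ) : ℝ :=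
  ‖(Matrix.toEuclideanLin A).toContinuousLinearMap‖

/-- The superoperator norm `‖S‖_{2→2} = sup {‖S(X)‖₂ : ‖X‖₂ ≤ 1}` induced by the
Frobenius norm. -/
noncomputable def superNorm22 [Fintype m] (S : Matrix (m × m) (m × m) ℂ) : ℝ :=
  ⨆ X : {X : Matrix m m ℂ // frobNorm X ≤ 1}, frobNorm (appS S X.1)

/-- The dual (Heisenberg-picture) superoperator `S*`, satisfying
`tr[A S*(B)] = tr[S(A) B]`. -/
def dualS [Fintype m] (S : Matrix (m × m) (m × m) ℂ) : Matrix (m × m) (m × m) ℂ :=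
  Matrix.of fun p q => S (q.2, q.1) (p.2, p.1)

/-- Matrix representation of the superoperator `ρ ↦ A ρ B`. -/
def sandwichS [Fintype m] (A B : Matrix m m ℂ) : Matrix (m × m) (m × m) ℂ :=
  Matrix.of fun p q => A p.1 q.1 * B q.2 p.2

/-- The Lindblad dissipator `ρ ↦ L ρ L† − (1/2)L†L ρ − (1/2)ρ L†L` in matrix
representation. -/
noncomputable def lindbladTermS [Fintype m] [DecidableEq m] (L : Matrix m m ℂ) :
    Matrix (m × m) (m × m) ℂ :=
  sandwichS L Lᴴ - (1 / 2 : ℂ) • sandwichS (Lᴴ * L) 1 - (1 / 2 : ℂ) • sandwichS 1 (Lᴴ * L)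

/-- Tensor (Kronecker) product of two superoperators. -/
def kronS {m' : Type*} [Fintype m] [Fintype m'] (S : Matrix (m × m) (m × m) ℂ)
    (S' : Matrix (m' × m') (m' × m') ℂ) :
    Matrix ((m × m') × (m × m')) ((m × m') × (m × m')) ℂ :=
  Matrix.of fun p q =>
    S (p.1.1, p.2.1) (q.1.1, q.2.1) * S' (p.1.2, p.2.2) (q.1.2, q.2.2)

end Defs

/-- `n`-fold tensor power `S^{⊗n}` of a superoperator on `M_d`. -/
noncomputable def tensorPowS (n : ℕ) {d : ℕ} (S : Matrix (Fin d × Fin d) (Fin d × Fin d) ℂ) :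
    Matrix ((Fin n → Fin d) × (Fin n → Fin d)) ((Fin n → Fin d) × (Fin n → Fin d)) ℂ :=
  Matrix.of fun p q => ∏ i, S (p.1 i, p.2 i) (q.1 i, q.2 i)

/-- `n`-fold tensor power `ρ^{⊗n}` of a matrix. -/
noncomputable def tensorPowM (n : ℕ) {d : ℕ} (ρ : Matrix (Fin d) (Fin d) ℂ) :
    Matrix (Fin n → Fin d) (Fin n → Fin d) ℂ :=
  Matrix.of fun x y => ∏ i, ρ (x i) (y i)

/-- Tensor product `A 0 ⊗ A 1 ⊗ … ⊗ A (n-1)` of a family of matrices. -/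
noncomputable def tensorFamilyM {n d : ℕ} (A : Fin n → Matrix (Fin d) (Fin d) ℂ) :
    Matrix (Fin n → Fin d) (Fin n → Fin d) ℂ :=
  Matrix.of fun x y => ∏ i, A i (x i) (y i)

/-- The qubit amplitude damping Liouvillian with rate `γ`:
`ℒ(ρ) = γ(⟨1|ρ|1⟩|0⟩⟨0| − (1/2)|1⟩⟨1|ρ − (1/2)ρ|1⟩⟨1|)`, in matrix representation. -/
noncomputable def ampDampS (γ : ℝ) : Matrix (Fin 2 × Fin 2) (Fin 2 × Fin 2) ℂ :=
  (γ : ℂ) • (sandwichS (Matrix.single 0 1 1) (Matrix.single 1 0 1)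
    - (1 / 2 : ℂ) • sandwichS (Matrix.single 1 1 1) 1
    - (1 / 2 : ℂ) • sandwichS 1 (Matrix.single 1 1 1))

/-! ### Auxiliary machinery for the amplitude damping contraction -/

namespace AmpDampAux

noncomputable abbrev eeM : Matrix (Fin 2 × Fin 2) (Fin 2 × Fin 2) ℂ :=
  Matrix.single ((0:Fin 2),(0:Fin 2)) ((1:Fin 2),(1:Fin 2)) 1

noncomputable def uM : Matrix (Fin 2 × Fin 2) (Fin 2 × Fin 2) ℂ := 1 - eeM
noncomputable def vM : Matrix (Fin 2 × Fin 2) (Fin 2 × Fin 2) ℂ := 1 + eeM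

noncomputable def dvec (x : ℝ) : Fin 2 × Fin 2 → ℂ := fun p =>
  if p = (0,0) then 0 else if p = (1,1) then (-x : ℝ) else ((-(x/2) : ℝ) : ℂ)

lemma ee_mul_ee : eeM * eeM = 0 := by
  ext p q
  simp [Matrix.mul_apply, Matrix.single, Prod.ext_iff, Fintype.sum_prod_type,
    Fin.sum_univ_two]

lemma uv_mul : uM * vM = 1 := by
  simp [uM, vM, mul_add, sub_mul, ee_mul_ee]

lemma vu_mul : vM * uM = 1 := by
  simp [uM, vM, mul_sub, add_mul, ee_mul_ee]

set_option maxHeartbeats 1000000 in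
lemma smul_ampDamp (γ t : ℝ) :
    (t : ℂ) • ampDampS γ = uM * diagonal (dvec (γ * t)) * vM := by
  ext ⟨i, j⟩ ⟨k, l⟩
  fin_cases i <;> fin_cases j <;> fin_cases k <;> fin_cases l <;>
    simp [ampDampS, sandwichS, uM, vM, dvec, Matrix.mul_apply, Fintype.sum_prod_type,
      Fin.sum_univ_two, Matrix.single, Matrix.one_apply, diagonal, Prod.ext_iff] <;> ring

lemma expS_ampDamp (γ t : ℝ) :
    expS t (ampDampS γ) = uM * diagonal (fun p => Complex.exp (dvec (γ*t) p)) * vM := by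
  have hU : IsUnit uM := ⟨⟨uM, vM, uv_mul, vu_mul⟩, rfl⟩
  have hinv : uM⁻¹ = vM := Matrix.inv_eq_right_inv uv_mul
  rw [expS, smul_ampDamp γ t, ← hinv, Matrix.exp_conj _ _ hU, Matrix.exp_diagonal, hinv]
  congr 1
  ext p
  simp [Complex.exp_eq_exp_ℂ]

set_option maxHeartbeats 1000000 in
lemma appS_expS (γ t : ℝ) (ρ : Matrix (Fin 2) (Fin 2) ℂ) :
    appS (expS t (ampDampS γ)) ρ =
      !![ρ 0 0 + (1 - (Real.exp (-(γ*t)) : ℂ)) * ρ 1 1,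
          (Real.exp (-(γ*t/2)) : ℂ) * ρ 0 1;
          (Real.exp (-(γ*t/2)) : ℂ) * ρ 1 0,
          (Real.exp (-(γ*t)) : ℂ) * ρ 1 1] := by
  rw [expS_ampDamp]
  ext i j
  fin_cases i <;> fin_cases j <;>
    simp [appS, uM, vM, dvec, Matrix.mul_apply, Fintype.sum_prod_type, Fin.sum_univ_two,
      Matrix.single, Matrix.one_apply, diagonal, Prod.ext_iff,
      ← Complex.ofReal_exp] <;>
    push_cast <;> ring_nf <;>
    simp [neg_div, ← Complex.ofReal_exp] <;> ring

lemma sqrt_smul_one_eq {n : Type*} [Fintype n] [DecidableEq n] (r : ℝ) (hr : 0 ≤ r)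
    {A : Matrix n n ℂ} (hA : A.PosSemidef) (h : ((r:ℂ) • (1 : Matrix n n ℂ))^2 = A) :
    (r:ℂ) • (1 : Matrix n n ℂ) = hA.sqrt := by
  have hd := hA.1.conjStarAlgAut_star_eigenvectorUnitary
  rw [Unitary.conjStarAlgAut_star_apply] at hd
  have key : ∀ U : unitary (Matrix n n ℂ),
      star (U : Matrix n n ℂ) * A * (U : Matrix n n ℂ) = ((r:ℂ)^2) • (1 : Matrix n n ℂ) := by
    intro U
    rw [← h, smul_pow, one_pow, Matrix.mul_smul, mul_one, Matrix.smul_mul,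
      Unitary.star_mul_self_of_mem (SetLike.coe_mem _)]
  rw [key] at hd
  have he : ∀ i, hA.1.eigenvalues i = r^2 := by
    intro i
    have h3 := congrFun (congrFun hd.symm i) i
    simp only [diagonal_apply_eq, Function.comp_apply, Matrix.smul_apply, one_apply_eq,
      smul_eq_mul, mul_one] at h3
    have h4 : (RCLike.ofReal (hA.1.eigenvalues i) : ℂ) = RCLike.ofReal (r^2) := by
      rw [h3]; simp
    exact RCLike.ofReal_injective h4
  rw [Matrix.PosSemidef.sqrt]
  have hdg : (diagonal (RCLike.ofReal ∘ (√·) ∘ hA.1.eigenvalues) : Matrix n n ℂ) = (r:ℂ) • 1 := by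
    ext i j
    by_cases hij : i = j
    · subst hij; simp [he i, Real.sqrt_sq hr]
    · simp [hij]
  rw [hdg, Matrix.mul_smul, mul_one, Matrix.smul_mul, Unitary.mul_star_self_of_mem (SetLike.coe_mem _)]

lemma traceNorm_special (a : ℝ) (b : ℂ) :
    traceNorm !![(-a : ℂ), b; star b, (a:ℂ)] = 2 * Real.sqrt (a^2 + Complex.normSq b) := by
  set X : Matrix (Fin 2) (Fin 2) ℂ := !![(-a : ℂ), b; star b, (a:ℂ)] with hX
  set r : ℝ := Real.sqrt (a^2 + Complex.normSq b) with hr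
  have hr0 : 0 ≤ r := Real.sqrt_nonneg _
  have hr2 : (r:ℝ)^2 = a^2 + Complex.normSq b :=
    Real.sq_sqrt (by nlinarith [Complex.normSq_nonneg b, sq_nonneg a])
  have hpsd : ((r:ℂ) • (1 : Matrix (Fin 2) (Fin 2) ℂ)).PosSemidef := by
    rw [Matrix.smul_one_eq_diagonal]
    exact Matrix.posSemidef_diagonal_iff.mpr fun i => Complex.zero_le_real.mpr hr0
  have hsq : ((r:ℂ) • (1 : Matrix (Fin 2) (Fin 2) ℂ))^2 = Xᴴ * X := by
    ext i j
    fin_cases i <;> fin_cases j <;>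
      simp [X, Matrix.mul_apply, Fin.sum_univ_two, pow_two, Matrix.one_apply,
        Matrix.conjTranspose_apply] <;>
      simp only [Complex.ext_iff, Complex.normSq_apply, pow_two] at hr2 ⊢ <;>
      simp <;> constructor <;> linarith [hr2]
  have := sqrt_smul_one_eq r hr0 (Matrix.posSemidef_conjTranspose_mul_self X) hsq
  rw [traceNorm, ← this, Matrix.trace_smul]
  simp [Matrix.trace_one]
  ring

lemma diag_re_nonneg {ρ : Matrix (Fin 2) (Fin 2) ℂ} (h : ρ.PosSemidef) (i : Fin 2) :
    0 ≤ (ρ i i).re := by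
  have := h.re_dotProduct_nonneg (Pi.single i 1)
  simpa [dotProduct, Matrix.mulVec, Fin.sum_univ_two, Pi.single_apply] using this

lemma offdiag_sq_le {ρ : Matrix (Fin 2) (Fin 2) ℂ} (h : ρ.PosSemidef) :
    Complex.normSq (ρ 0 1) ≤ (ρ 0 0).re * (ρ 1 1).re := by
  set a := (ρ 0 0).re; set p := (ρ 1 1).re; set n := Complex.normSq (ρ 0 1)
  have ha : 0 ≤ a := diag_re_nonneg h 0
  have hp : 0 ≤ p := diag_re_nonneg h 1
  have h00 : ρ 0 0 = (a : ℂ) := (h.1.coe_re_apply_self 0).symm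
  have h11 : ρ 1 1 = (p : ℂ) := (h.1.coe_re_apply_self 1).symm
  have h10 : ρ 1 0 = star (ρ 0 1) := (h.1.apply 1 0).symm
  have key : ∀ x : ℝ, 0 ≤ (a * n) * (x * x) + (2 * n) * x + p := by
    intro x
    have := h.re_dotProduct_nonneg ![(x : ℂ) * ρ 0 1, 1]
    simp only [dotProduct, Matrix.mulVec, Fin.sum_univ_two] at this
    rw [show ((![(x : ℂ) * ρ 0 1, 1]) 0) = (x:ℂ) * ρ 0 1 from rfl,
        show ((![(x : ℂ) * ρ 0 1, 1]) 1) = 1 from rfl] at this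
    rw [h00, h11, h10] at this
    convert this using 1
    simp [Complex.add_re, Complex.mul_re, Complex.mul_im, Complex.normSq_apply,
      Complex.conj_re, Complex.conj_im, n]
    ring
  have hd := discrim_le_zero key
  rw [discrim] at hd
  have hn : 0 ≤ n := Complex.normSq_nonneg _
  rcases eq_or_lt_of_le hn with h0 | h0
  · nlinarith
  · nlinarith

/-- The exact trace distance formula. -/
lemma trDist_formula (γ t : ℝ) (ρ : Matrix (Fin 2) (Fin 2) ℂ) (hρ : IsDensityMatrix ρ) :
    trDist (appS (expS t (ampDampS γ)) ρ) (Matrix.single 0 0 1) =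
      Real.sqrt ((Real.exp (-(γ*t)) * (ρ 1 1).re)^2
        + Real.exp (-(γ*t)) * Complex.normSq (ρ 0 1)) := by
  obtain ⟨hpsd, htr⟩ := hρ
  set p : ℝ := (ρ 1 1).re with hpdef
  have h11 : ρ 1 1 = (p : ℂ) := (hpsd.1.coe_re_apply_self 1).symm
  have h10 : ρ 1 0 = star (ρ 0 1) := (hpsd.1.apply 1 0).symm
  have htr2 : ρ 0 0 + ρ 1 1 = 1 := by
    simpa [Matrix.trace, Fin.sum_univ_two] using htr
  set a : ℝ := Real.exp (-(γ*t)) * p with hadef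
  set b : ℂ := (Real.exp (-(γ*t/2)) : ℂ) * ρ 0 1 with hbdef
  have hXeq : appS (expS t (ampDampS γ)) ρ - Matrix.single 0 0 1 =
      !![(-a : ℂ), b; star b, (a:ℂ)] := by
    rw [appS_expS]
    ext i j
    fin_cases i <;> fin_cases j
    · simp [Matrix.single, hadef, hbdef, h10, Prod.ext_iff, ← Complex.ofReal_exp]
      rw [h11]
      linear_combination htr2 - h11
    · simp [Matrix.single, hadef, hbdef, h10, Prod.ext_iff, ← Complex.ofReal_exp]
    · simp [Matrix.single, hadef, hbdef, h10, Prod.ext_iff, ← Complex.ofReal_exp]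
    · simp [Matrix.single, hadef, hbdef, h11, h10, Prod.ext_iff, ← Complex.ofReal_exp]
  have hnb : Complex.normSq b = Real.exp (-(γ*t)) * Complex.normSq (ρ 0 1) := by
    rw [hbdef, Complex.normSq_mul, Complex.normSq_ofReal, ← Real.exp_add]
    ring_nf
  rw [trDist, hXeq, traceNorm_special, hnb, hadef]
  ring_nf

/-- Square of the key quantity. -/
lemma value_sq (η p n : ℝ) : (η * p)^2 + η * n = η^2*p^2 + η*n := by ring

lemma bound_case1 {η p n : ℝ} (hη : 1/2 ≤ η) (hη1 : η ≤ 1) (hp0 : 0 ≤ p) (hp1 : p ≤ 1)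
    (hn : 0 ≤ n) (hnc : n ≤ (1-p)*p) : (η*p)^2 + η*n ≤ η^2 := by
  have h1 : 0 ≤ η - (1-η)*p := by nlinarith
  have h2 : 0 ≤ (1-p) * (η - (1-η)*p) := mul_nonneg (by linarith) h1
  nlinarith [mul_le_mul_of_nonneg_left hnc (by linarith : (0:ℝ) ≤ η)]

lemma bound_case2 {η p n : ℝ} (hη0 : 0 < η) (hη : η ≤ 1/2) (hp0 : 0 ≤ p) (hp1 : p ≤ 1)
    (hn : 0 ≤ n) (hnc : n ≤ (1-p)*p) : (η*p)^2 + η*n ≤ η/(4*(1-η)) := by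
  have h1 : (0:ℝ) < 1 - η := by linarith
  rw [le_div_iff₀ (by positivity)]
  nlinarith [mul_nonneg hη0.le (sq_nonneg (1 - 2*(1-η)*p)),
    mul_le_mul_of_nonneg_left hnc hη0.le, sq_nonneg (1 - 2*(1-η)*p)]

/-- The pure state `|ψ⟩⟨ψ|` with `ψ = (√(1-p), √p)`. -/
noncomputable def pureRho (p : ℝ) : Matrix (Fin 2) (Fin 2) ℂ :=
  (!![(Real.sqrt (1-p) : ℂ), (Real.sqrt p : ℂ)] :
      Matrix (Fin 1) (Fin 2) ℂ)ᴴ *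
    !![(Real.sqrt (1-p) : ℂ), (Real.sqrt p : ℂ)]

lemma pureRho_apply (p : ℝ) (i j : Fin 2) :
    pureRho p i j = ((if i = 0 then Real.sqrt (1-p) else Real.sqrt p) *
      (if j = 0 then Real.sqrt (1-p) else Real.sqrt p) : ℝ) := by
  fin_cases i <;> fin_cases j <;>
    simp [pureRho, Matrix.mul_apply, Matrix.conjTranspose_apply, Fin.sum_univ_one] <;>
    push_cast <;> ring

lemma pureRho_density {p : ℝ} (hp0 : 0 ≤ p) (hp1 : p ≤ 1) : IsDensityMatrix (pureRho p) := by
  refine ⟨Matrix.posSemidef_conjTranspose_mul_self _, ?_⟩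
  have h1 : Real.sqrt (1-p) * Real.sqrt (1-p) = 1 - p :=
    Real.mul_self_sqrt (by linarith)
  have h2 : Real.sqrt p * Real.sqrt p = p := Real.mul_self_sqrt hp0
  rw [Matrix.trace, Fin.sum_univ_two, Matrix.diag_apply, Matrix.diag_apply,
    pureRho_apply, pureRho_apply]
  simp only [if_pos rfl, if_neg (by decide : (1 : Fin 2) ≠ 0)]
  push_cast [h1, h2]
  ring

end AmpDampAux


open AmpDampAux in
/-- **Exact contraction of the qubit amplitude damping semigroup.** -/
theorem amplitude_damping_contraction (γ : ℝ) (hγ : 0 < γ) :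
    (∀ t : ℝ, 0 ≤ t → t ≤ Real.log 2 / γ →
      (⨆ ρ : {ρ : Matrix (Fin 2) (Fin 2) ℂ // IsDensityMatrix ρ},
          trDist (appS (expS t (ampDampS γ)) ρ.1) (Matrix.single 0 0 1)) =
        Real.exp (-(γ * t))) ∧
    (∀ t : ℝ, Real.log 2 / γ ≤ t →
      (⨆ ρ : {ρ : Matrix (Fin 2) (Fin 2) ℂ // IsDensityMatrix ρ},
          trDist (appS (expS t (ampDampS γ)) ρ.1) (Matrix.single 0 0 1)) =
        Real.exp (-(γ * t / 2)) / Real.sqrt (4 * (1 - Real.exp (-(γ * t))))) := by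
  have hlog2 : (0:ℝ) < Real.log 2 := Real.log_pos (by norm_num)
  -- generic facts about density matrices
  have facts : ∀ ρ : Matrix (Fin 2) (Fin 2) ℂ, IsDensityMatrix ρ →
      0 ≤ (ρ 1 1).re ∧ (ρ 1 1).re ≤ 1 ∧ 0 ≤ Complex.normSq (ρ 0 1) ∧
      Complex.normSq (ρ 0 1) ≤ (1 - (ρ 1 1).re) * (ρ 1 1).re := by
    intro ρ hρ
    have h0 := diag_re_nonneg hρ.1 0
    have h1 := diag_re_nonneg hρ.1 1
    have htr : (ρ 0 0).re + (ρ 1 1).re = 1 := by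
      have := congrArg Complex.re hρ.2
      simpa [Matrix.trace, Fin.sum_univ_two] using this
    have hoff := offdiag_sq_le hρ.1
    refine ⟨h1, by linarith, Complex.normSq_nonneg _, ?_⟩
    have : (ρ 0 0).re = 1 - (ρ 1 1).re := by linarith
    rwa [this] at hoff
  constructor
  · -- Case 1 : `t ≤ log 2 / γ`
    intro t ht0 ht1
    set η : ℝ := Real.exp (-(γ*t)) with hηdef
    have hη0 : 0 < η := Real.exp_pos _
    have hη1 : η ≤ 1 := Real.exp_le_one_iff.mpr (by nlinarith)
    have hγt : γ * t ≤ Real.log 2 := by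
      rw [le_div_iff₀ hγ] at ht1; linarith [ht1]
    have hη2 : 1/2 ≤ η := by
      have : Real.exp (-(Real.log 2)) ≤ η := Real.exp_le_exp.mpr (by linarith)
      rwa [Real.exp_neg, Real.exp_log (by norm_num), show ((2:ℝ))⁻¹ = 1/2 by norm_num] at this
    -- the optimal state
    have hopt : IsDensityMatrix (Matrix.single (1 : Fin 2) 1 (1:ℂ)) := by
      constructor
      · have : Matrix.single (1 : Fin 2) 1 (1:ℂ) =
            Matrix.diagonal (fun i => if i = 1 then 1 else 0) := by
          ext i j; fin_cases i <;> fin_cases j <;> simp [Matrix.single, Matrix.diagonal]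
        rw [this]
        refine Matrix.posSemidef_diagonal_iff.mpr fun i => ?_
        split <;> simp
      · simp [Matrix.trace, Fin.sum_univ_two, Matrix.single]
    have hub : ∀ ρ : {ρ : Matrix (Fin 2) (Fin 2) ℂ // IsDensityMatrix ρ},
        trDist (appS (expS t (ampDampS γ)) ρ.1) (Matrix.single 0 0 1) ≤ η := by
      rintro ⟨ρ, hρ⟩
      obtain ⟨hp0, hp1, hn0, hnc⟩ := facts ρ hρ
      rw [trDist_formula γ t ρ hρ]
      calc Real.sqrt ((η * (ρ 1 1).re)^2 + η * Complex.normSq (ρ 0 1))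
          ≤ Real.sqrt (η^2) :=
            Real.sqrt_le_sqrt (bound_case1 hη2 hη1 hp0 hp1 hn0 hnc)
        _ = η := Real.sqrt_sq hη0.le
    have hval : trDist (appS (expS t (ampDampS γ))
        (Matrix.single (1 : Fin 2) 1 (1:ℂ))) (Matrix.single 0 0 1) = η := by
      rw [trDist_formula γ t _ hopt]
      simp [Matrix.single]
      rw [Real.sqrt_sq hη0.le]
    haveI : Nonempty {ρ : Matrix (Fin 2) (Fin 2) ℂ // IsDensityMatrix ρ} := ⟨⟨_, hopt⟩⟩
    have hbdd : BddAbove (Set.range fun ρ : {ρ : Matrix (Fin 2) (Fin 2) ℂ // IsDensityMatrix ρ} =>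
        trDist (appS (expS t (ampDampS γ)) ρ.1) (Matrix.single 0 0 1)) :=
      ⟨η, by rintro x ⟨ρ, rfl⟩; exact hub ρ⟩
    refine le_antisymm (ciSup_le hub) ?_
    rw [← hval]
    exact le_ciSup hbdd ⟨_, hopt⟩
  · -- Case 2 : `t ≥ log 2 / γ`
    intro t ht1
    have ht0 : 0 ≤ t := le_trans (by positivity) ht1
    set η : ℝ := Real.exp (-(γ*t)) with hηdef
    have hη0 : 0 < η := Real.exp_pos _
    have hγt : Real.log 2 ≤ γ * t := by
      rw [div_le_iff₀ hγ] at ht1; linarith [ht1]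
    have hη2 : η ≤ 1/2 := by
      have : η ≤ Real.exp (-(Real.log 2)) := Real.exp_le_exp.mpr (by linarith)
      rwa [Real.exp_neg, Real.exp_log (by norm_num), show ((2:ℝ))⁻¹ = 1/2 by norm_num] at this
    have h1η : (0:ℝ) < 1 - η := by linarith
    -- the target value
    have hsqη : Real.sqrt η = Real.exp (-(γ*t/2)) := by
      have : η = Real.exp (-(γ*t/2))^2 := by
        rw [hηdef, pow_two, ← Real.exp_add]; congr 1; ring
      rw [this, Real.sqrt_sq (Real.exp_pos _).le]
    have hBeq : Real.exp (-(γ * t / 2)) / Real.sqrt (4 * (1 - Real.exp (-(γ * t)))) =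
        Real.sqrt (η / (4*(1-η))) := by
      rw [Real.sqrt_div hη0.le, hsqη]
    rw [hBeq]
    set B : ℝ := Real.sqrt (η / (4*(1-η))) with hBdef
    -- the optimal state
    set p₀ : ℝ := 1/(2*(1-η)) with hp₀def
    have hp₀0 : 0 < p₀ := by positivity
    have hp₀1 : p₀ ≤ 1 := by
      rw [hp₀def, div_le_one (by linarith)]; linarith
    have hopt := pureRho_density hp₀0.le hp₀1
    have hub : ∀ ρ : {ρ : Matrix (Fin 2) (Fin 2) ℂ // IsDensityMatrix ρ},
        trDist (appS (expS t (ampDampS γ)) ρ.1) (Matrix.single 0 0 1) ≤ B := by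
      rintro ⟨ρ, hρ⟩
      obtain ⟨hp0, hp1, hn0, hnc⟩ := facts ρ hρ
      rw [trDist_formula γ t ρ hρ]
      exact Real.sqrt_le_sqrt (bound_case2 hη0 hη2 hp0 hp1 hn0 hnc)
    have h11 : ((pureRho p₀) 1 1).re = p₀ := by
      rw [pureRho_apply]
      simp [Real.mul_self_sqrt hp₀0.le]
    have h01 : Complex.normSq ((pureRho p₀) 0 1) = (1-p₀)*p₀ := by
      rw [pureRho_apply, Complex.normSq_ofReal]
      have e1 : Real.sqrt (1-p₀) * Real.sqrt (1-p₀) = 1 - p₀ :=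
        Real.mul_self_sqrt (by linarith)
      have e2 : Real.sqrt p₀ * Real.sqrt p₀ = p₀ := Real.mul_self_sqrt hp₀0.le
      norm_num
      nlinarith [e1, e2]
    have hval : trDist (appS (expS t (ampDampS γ)) (pureRho p₀))
        (Matrix.single 0 0 1) = B := by
      rw [trDist_formula γ t _ hopt, h11, h01, hBdef]
      congr 1
      rw [hp₀def]
      field_simp
      ring
    haveI : Nonempty {ρ : Matrix (Fin 2) (Fin 2) ℂ // IsDensityMatrix ρ} := ⟨⟨_, hopt⟩⟩
    have hbdd : BddAbove (Set.range fun ρ : {ρ : Matrix (Fin 2) (Fin 2) ℂ // IsDensityMatrix ρ} =>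
        trDist (appS (expS t (ampDampS γ)) ρ.1) (Matrix.single 0 0 1)) :=
      ⟨B, by rintro x ⟨ρ, rfl⟩; exact hub ρ⟩
    refine le_antisymm (ciSup_le hub) ?_
    rw [← hval]
    exact le_ciSup hbdd ⟨_, hopt⟩
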